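/- arXiv:2201.10302 — 7 statements merged into one kernel-verified Lean document; each statement's English description precedes it below -/
import Mathlib

section
/- The category of finite posets with quotient maps (arrows reversed) has the amalgamation property: given finite posets A, B, C and quotient maps f : B → A and g : C → A, there exist a finite poset D and quotient maps q : D → B and p : D → C with f ∘ q = g ∘ p. -/
/-- A quotient map of posets. -/
def IsPosetQuotient {A B : Type*} [Preorder A] [Preorder B] (f : A → B) : Prop :=
  Function.Surjective f ∧ Monotone f ∧
    ∀ p r : B, p ≤ r → ∃ x y : A, x ≤ y ∧ f x = p ∧ f y = r

/-- the category of finite posets with quotient maps has the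
amalgamation property. -/
theorem stmt_3 {A B C : Type*} [PartialOrder A] [PartialOrder B] [PartialOrder C]
    [Fintype A] [Fintype B] [Fintype C] (f : B → A) (g : C → A)
    (hf : IsPosetQuotient f) (hg : IsPosetQuotient g) :
    ∃ (D : Type) (iD : PartialOrder D) (_ : Fintype D) (q : D → B) (p : D → C),
      @IsPosetQuotient D B iD.toPreorder inferInstance q ∧
      @IsPosetQuotient D C iD.toPreorder inferInstance p ∧
      f ∘ q = g ∘ p := by
  classical
  obtain ⟨fsurj, fmono, fquot⟩ := hf
  obtain ⟨gsurj, gmono, gquot⟩ := hg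
  set S : Type _ := {x : B × C // f x.1 = g x.2} with hS
  let e : Fin (Fintype.card S) ≃ S := (Fintype.equivFin S).symm
  refine ⟨Fin (Fintype.card S), PartialOrder.lift (fun i => (e i : B × C)) ?_,
    inferInstance, fun i => (e i : B × C).1, fun i => (e i : B × C).2, ?_, ?_, ?_⟩
  · intro i j h
    exact e.injective (Subtype.ext h)
  · refine ⟨?_, ?_, ?_⟩
    · intro b
      obtain ⟨c, hc⟩ := gsurj (f b)
      exact ⟨e.symm ⟨(b, c), hc.symm⟩, by simp⟩
    · intro i j h
      exact h.1
    · intro b b' hbb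
      obtain ⟨c, c', hcc, hc, hc'⟩ := gquot (f b) (f b') (fmono hbb)
      refine ⟨e.symm ⟨(b, c), hc.symm⟩, e.symm ⟨(b', c'), hc'.symm⟩, ?_, by simp, by simp⟩
      show ((e (e.symm _) : B × C)) ≤ _
      simp only [Equiv.apply_symm_apply]
      exact ⟨hbb, hcc⟩
  · refine ⟨?_, ?_, ?_⟩
    · intro c
      obtain ⟨b, hb⟩ := fsurj (g c)
      exact ⟨e.symm ⟨(b, c), hb⟩, by simp⟩
    · intro i j h
      exact h.2
    · intro c c' hcc
      obtain ⟨b, b', hbb, hb, hb'⟩ := fquot (g c) (g c') (gmono hcc)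
      refine ⟨e.symm ⟨(b, c), hb⟩, e.symm ⟨(b', c'), hb'⟩, ?_, by simp, by simp⟩
      show ((e (e.symm _) : B × C)) ≤ _
      simp only [Equiv.apply_symm_apply]
      exact ⟨hbb, hcc⟩
  · funext i
    exact (e i).2
end

section
/- Let ℙ = {0,1,2,3}^ω with the partial order defined by: x ≤ y iff x = y, or there exists n with x(k)=y(k) for k<n, x(n)=2, y(n)=3, and x(k)=y(k)∈{0,1} for k>n, or x(0)=0, y(0)=1 and x(k)=y(k)∈{0,1} for all k≥1. Then for x, y ∈ ℙ, x ≤ y if and only if for every n the restrictions satisfy x↾n ≤_n y↾n, where ≤_n is the analogously defined order on {0,1,2,3}^n. -/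
/-- The order on `ℙ = {0,1,2,3}^ω`. -/
def leOmega (x y : ℕ → Fin 4) : Prop :=
  x = y ∨
  (∃ n : ℕ, (∀ k < n, x k = y k) ∧ x n = 2 ∧ y n = 3 ∧
    ∀ k, n < k → x k = y k ∧ (x k = 0 ∨ x k = 1)) ∨
  (x 0 = 0 ∧ y 0 = 1 ∧ ∀ k : ℕ, 1 ≤ k → x k = y k ∧ (x k = 0 ∨ x k = 1))

/-- The order `≤ₙ` on `P_n = {0,1,2,3}^n`. -/
def leFin {n : ℕ} (x y : Fin n → Fin 4) : Prop :=
  x = y ∨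
  (∃ l : Fin n, (∀ k, k < l → x k = y k) ∧ x l = 2 ∧ y l = 3 ∧
    ∀ k, l < k → x k = y k ∧ (x k = 0 ∨ x k = 1)) ∨
  (∃ h : 0 < n, x ⟨0, h⟩ = 0 ∧ y ⟨0, h⟩ = 1 ∧
    ∀ k : Fin n, 1 ≤ (k : ℕ) → x k = y k ∧ (x k = 0 ∨ x k = 1))

/-- `x ≤ y` in `ℙ` iff all finite restrictions satisfy `x↾n ≤ₙ y↾n`. -/
theorem stmt_7 (x y : ℕ → Fin 4) :
    leOmega x y ↔ ∀ n : ℕ, leFin (fun k : Fin n => x k.1) (fun k : Fin n => y k.1) := by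
  constructor
  · rintro (rfl | ⟨m, h1, h2, h3, h4⟩ | ⟨h0, h1, h2⟩) n
    · exact Or.inl rfl
    · by_cases hm : m < n
      · exact Or.inr (Or.inl ⟨⟨m, hm⟩, fun k hk => h1 k.1 hk, h2, h3,
          fun k hk => h4 k.1 hk⟩)
      · left; funext k
        exact h1 k.1 (lt_of_lt_of_le k.2 (not_lt.1 hm))
    · rcases Nat.eq_zero_or_pos n with rfl | hn
      · left; funext k; exact absurd k.2 (Nat.not_lt_zero _)
      · exact Or.inr (Or.inr ⟨hn, h0, h1, fun k hk => h2 k.1 hk⟩)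
  · intro h
    by_cases hxy : x = y
    · exact Or.inl hxy
    · have hex : ∃ m, x m ≠ y m := by
        by_contra hc; push_neg at hc; exact hxy (funext hc)
      set m := Nat.find hex with hmdef
      have hm : x m ≠ y m := Nat.find_spec hex
      have hmin : ∀ k, k < m → x k = y k := fun k hk => by
        by_contra hc; exact absurd (Nat.find_le hc) (not_le.2 hk)
      -- key: for each n > m, analyze h (n)
      have key : ∀ n, m < n → ∃ l : Fin n,
          (l : ℕ) = m ∧ ((x l.1 = 2 ∧ y l.1 = 3 ∧
            ∀ k : Fin n, l < k → x k.1 = y k.1 ∧ (x k.1 = 0 ∨ x k.1 = 1)) ∨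
          (m = 0 ∧ x 0 = 0 ∧ y 0 = 1 ∧
            ∀ k : Fin n, 1 ≤ (k : ℕ) → x k.1 = y k.1 ∧ (x k.1 = 0 ∨ x k.1 = 1))) := by
        intro n hn
        rcases h n with heq | ⟨l, h1, h2, h3, h4⟩ | ⟨hp, h0, h1, h2⟩
        · exact absurd (congrFun heq ⟨m, hn⟩) hm
        · have hl : (l : ℕ) = m := by
            rcases lt_trichotomy (l : ℕ) m with hlt | heq | hgt
            · exact absurd (hmin l.1 hlt) (by rw [show x l.1 = 2 from h2, show y l.1 = 3 from h3]; decide)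
            · exact heq
            · exact absurd (h1 ⟨m, lt_trans hgt l.2⟩ hgt) hm
          exact ⟨l, hl, Or.inl ⟨h2, h3, h4⟩⟩
        · have h0x : x 0 = 0 := h0
          have h1y : y 0 = 1 := h1
          have hm0 : m = 0 := by
            by_contra h0'
            have := hmin 0 (Nat.pos_of_ne_zero h0')
            rw [h0x, h1y] at this; exact absurd this (by decide)
          exact ⟨⟨0, hp⟩, by simp [hm0], Or.inr ⟨hm0, h0x, h1y, h2⟩⟩
      rcases key (m + 1) m.lt_succ_self with ⟨l, hl, hcase⟩
      rcases hcase with ⟨h2, h3, _⟩ | ⟨hm0, h0, h1, _⟩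
      · -- case 2 globally
        rw [hl] at h2 h3
        refine Or.inr (Or.inl ⟨m, hmin, h2, h3, fun k hk => ?_⟩)
        rcases key (k + 1) (hk.trans k.lt_succ_self) with ⟨l', hl', hcase'⟩
        rcases hcase' with ⟨_, _, h4'⟩ | ⟨hm0, h0, _, _⟩
        · exact h4' ⟨k, k.lt_succ_self⟩ (by simp only [Fin.lt_def, hl']; exact hk)
        · have hc : x m = 0 := by rw [hm0]; exact h0
          rw [h2] at hc; exact absurd hc (by decide)
      · refine Or.inr (Or.inr ⟨h0, h1, fun k hk => ?_⟩)
        rcases key (k + 1) (by omega) with ⟨l', hl', hcase'⟩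
        rcases hcase' with ⟨h2', h3', _⟩ | ⟨_, _, _, h4'⟩
        · have hc : x 0 = 2 := by rw [← hm0, ← hl']; exact h2'
          rw [h0] at hc; exact absurd hc (by decide)
        · exact h4' ⟨k, k.lt_succ_self⟩ hk
end

section
/- Let (X,d) be a compact metric space and E a closed relation on X (a closed subset of X × X). Then the set of E-isolated points — points x such that for every y ≠ x neither (x,y) ∈ E nor (y,x) ∈ E — is a G_δ subset of X. -/
/-- for a closed relation `E` on a compact metric space, the set of
`E`-isolated points is a `Gδ` set. -/
theorem stmt_10 {X : Type*} [MetricSpace X] [CompactSpace X]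
    (E : Set (X × X)) (hE : IsClosed E) :
    IsGδ {x : X | ∀ y : X, y ≠ x → (x, y) ∉ E ∧ (y, x) ∉ E} := by
  -- C n : points related (either way) to some point at distance ≥ 1/(n+1)
  set C : ℕ → Set X := fun n =>
    {x | ∃ y, (1 : ℝ) / (n + 1) ≤ dist x y ∧ ((x, y) ∈ E ∨ (y, x) ∈ E)} with hC
  have hclosed : ∀ n, IsClosed (C n) := by
    intro n
    have hK : IsClosed {p : X × X |
        (1 : ℝ) / (n + 1) ≤ dist p.1 p.2 ∧ (p ∈ E ∨ (p.2, p.1) ∈ E)} := by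
      apply IsClosed.inter
      · exact isClosed_le continuous_const (continuous_dist)
      · exact hE.union (hE.preimage (continuous_snd.prodMk continuous_fst))
    have hcomp : IsCompact {p : X × X |
        (1 : ℝ) / (n + 1) ≤ dist p.1 p.2 ∧ (p ∈ E ∨ (p.2, p.1) ∈ E)} :=
      hK.isCompact
    have himg : C n = Prod.fst '' {p : X × X |
        (1 : ℝ) / (n + 1) ≤ dist p.1 p.2 ∧ (p ∈ E ∨ (p.2, p.1) ∈ E)} := by
      ext x
      constructor
      · rintro ⟨y, h1, h2⟩; exact ⟨(x, y), ⟨h1, h2⟩, rfl⟩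
      · rintro ⟨⟨a, b⟩, ⟨h1, h2⟩, rfl⟩; exact ⟨b, h1, h2⟩
    rw [himg]
    exact (hcomp.image continuous_fst).isClosed
  have hset : {x : X | ∀ y : X, y ≠ x → (x, y) ∉ E ∧ (y, x) ∉ E} = ⋂ n, (C n)ᶜ := by
    ext x
    simp only [Set.mem_setOf_eq, Set.mem_iInter, Set.mem_compl_iff]
    constructor
    · intro h n hx
      obtain ⟨y, h1, h2⟩ := hx
      have hy : y ≠ x := by
        intro h'; subst h'
        simp at h1
        have : (0 : ℝ) < 1 / (n + 1) := by positivity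
        linarith
      rcases h2 with h2 | h2
      · exact (h y hy).1 h2
      · exact (h y hy).2 h2
    · intro h y hy
      have hd : 0 < dist x y := dist_pos.mpr (Ne.symm hy)
      obtain ⟨n, hn⟩ := exists_nat_one_div_lt hd
      constructor
      · intro hxy; exact h n ⟨y, le_of_lt hn, Or.inl hxy⟩
      · intro hyx; exact h n ⟨y, le_of_lt hn, Or.inr hyx⟩
  rw [hset]
  exact .iInter fun n => (hclosed n).isOpen_compl.isGδ
end

section
/- In the poset ℙ = {0,1,2,3}^ω with the order defined coordinatewise via the conditions (i)_ω and (ii)_ω, the set of order-isolated points (points comparable with no other point) is a dense G_δ subset of ℙ with the product topology. -/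
/-- The set of order-isolated points of `ℙ`: points comparable with no other point. -/
def isolatedPts : Set (ℕ → Fin 4) :=
  {x | ∀ y : ℕ → Fin 4, (leOmega x y ∨ leOmega y x) → y = x}

lemma fin4_cases (a : Fin 4) : a = 0 ∨ a = 1 ∨ a = 2 ∨ a = 3 := by
  fin_cases a <;> simp

lemma isolated_eq :
    isolatedPts = ⋂ n : ℕ, {x : ℕ → Fin 4 | ∃ k, n ≤ k ∧ (x k = 2 ∨ x k = 3)} := by
  ext x
  simp only [Set.mem_iInter, Set.mem_setOf_eq]
  constructor
  · -- isolated → infinitely many 2/3's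
    intro hx
    by_contra h
    push_neg at h
    obtain ⟨n, hn⟩ := h
    -- all coords ≥ n are 0 or 1
    have htail : ∀ k, n ≤ k → x k = 0 ∨ x k = 1 := by
      intro k hk
      rcases fin4_cases (x k) with h0 | h1 | h2 | h3
      · exact Or.inl h0
      · exact Or.inr h1
      · exact absurd h2 (hn k hk).1
      · exact absurd h3 (hn k hk).2
    set T := (Finset.range n).filter (fun k => x k = 2 ∨ x k = 3) with hT
    by_cases hne : T.Nonempty
    · -- last coordinate in {2,3}
      set m := T.max' hne with hm
      have hmT : m ∈ T := T.max'_mem hne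
      have hm23 : x m = 2 ∨ x m = 3 := by
        simp only [hT, Finset.mem_filter] at hmT; exact hmT.2
      have hgt : ∀ k, m < k → x k = 0 ∨ x k = 1 := by
        intro k hk
        by_cases hkn : n ≤ k
        · exact htail k hkn
        · rcases fin4_cases (x k) with h0 | h1 | h2 | h3
          · exact Or.inl h0
          · exact Or.inr h1
          · exact absurd (T.le_max' k (by simp [hT, Finset.mem_range, Nat.lt_of_not_le hkn, h2]))
              (Nat.not_le_of_lt hk)
          · exact absurd (T.le_max' k (by simp [hT, Finset.mem_range, Nat.lt_of_not_le hkn, h3]))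
              (Nat.not_le_of_lt hk)
      rcases hm23 with h2 | h3
      · -- y := update x m 3, x ≤ y
        have := hx (Function.update x m 3) (Or.inl (Or.inr (Or.inl ⟨m, by
          intro k hk; rw [Function.update_of_ne (Nat.ne_of_lt hk)], h2,
          Function.update_self m 3 x, by
          intro k hk
          rw [Function.update_of_ne (Nat.ne_of_gt hk)]
          exact ⟨rfl, hgt k hk⟩⟩)))
        have h3' : x m = 3 := by
          conv_lhs => rw [← this]
          exact Function.update_self m 3 x
        rw [h2] at h3'; exact absurd h3' (by decide)
      · -- y := update x m 2, y ≤ x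
        have := hx (Function.update x m 2) (Or.inr (Or.inr (Or.inl ⟨m, by
          intro k hk; rw [Function.update_of_ne (Nat.ne_of_lt hk)],
          Function.update_self m 2 x, h3, by
          intro k hk
          rw [Function.update_of_ne (Nat.ne_of_gt hk)]
          exact ⟨rfl, hgt k hk⟩⟩)))
        have h2' : x m = 2 := by
          conv_lhs => rw [← this]
          exact Function.update_self m 2 x
        rw [h3] at h2'; exact absurd h2' (by decide)
    · -- no coordinate in {2,3}: all in {0,1}
      have hall : ∀ k, x k = 0 ∨ x k = 1 := by
        intro k
        by_cases hkn : n ≤ k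
        · exact htail k hkn
        · rcases fin4_cases (x k) with h0 | h1 | h2 | h3
          · exact Or.inl h0
          · exact Or.inr h1
          · exact absurd ⟨k, by simp [hT, Finset.mem_range, Nat.lt_of_not_le hkn, h2]⟩ hne
          · exact absurd ⟨k, by simp [hT, Finset.mem_range, Nat.lt_of_not_le hkn, h3]⟩ hne
      rcases hall 0 with h0 | h1
      · have := hx (Function.update x 0 1) (Or.inl (Or.inr (Or.inr ⟨h0,
          Function.update_self 0 1 x, by
          intro k hk
          rw [Function.update_of_ne (by omega : k ≠ 0)]
          exact ⟨rfl, hall k⟩⟩)))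
        have h1' : x 0 = 1 := by
          conv_lhs => rw [← this]
          exact Function.update_self 0 1 x
        rw [h0] at h1'; exact absurd h1' (by decide)
      · have := hx (Function.update x 0 0) (Or.inr (Or.inr (Or.inr ⟨
          Function.update_self 0 0 x, h1, by
          intro k hk
          rw [Function.update_of_ne (by omega : k ≠ 0)]
          exact ⟨rfl, hall k⟩⟩)))
        have h0' : x 0 = 0 := by
          conv_lhs => rw [← this]
          exact Function.update_self 0 0 x
        rw [h1] at h0'; exact absurd h0' (by decide)
  · -- infinitely many 2/3's → isolated
    intro hS y hy
    rcases hy with hxy | hyx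
    · rcases hxy with rfl | ⟨n, _, hx2, hy3, htail⟩ | ⟨hx0, hy0, htail⟩
      · rfl
      · obtain ⟨k, hk, h23⟩ := hS (n + 1)
        rcases (htail k hk).2 with h | h <;> rcases h23 with h' | h' <;>
          rw [h] at h' <;> exact absurd h' (by decide)
      · obtain ⟨k, hk, h23⟩ := hS 1
        rcases (htail k hk).2 with h | h <;> rcases h23 with h' | h' <;>
          rw [h] at h' <;> exact absurd h' (by decide)
    · rcases hyx with rfl | ⟨n, hlt, hy2, hx3, htail⟩ | ⟨hy0, hx0, htail⟩
      · rfl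
      · obtain ⟨k, hk, h23⟩ := hS (n + 1)
        have := (htail k hk).1
        rcases (htail k hk).2 with h | h <;> rcases h23 with h' | h' <;>
          rw [← this, h] at h' <;> exact absurd h' (by decide)
      · obtain ⟨k, hk, h23⟩ := hS 1
        have := (htail k hk).1
        rcases (htail k hk).2 with h | h <;> rcases h23 with h' | h' <;>
          rw [← this, h] at h' <;> exact absurd h' (by decide)

/-- the set of order-isolated points of `ℙ = {0,1,2,3}^ω` is a dense
`Gδ` subset of `ℙ` with the product topology. -/
theorem stmt_11 : IsGδ isolatedPts ∧ Dense isolatedPts := by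
  rw [isolated_eq]
  constructor
  · apply IsGδ.iInter
    intro n
    apply IsOpen.isGδ
    have : {x : ℕ → Fin 4 | ∃ k, n ≤ k ∧ (x k = 2 ∨ x k = 3)} =
        ⋃ k, {x : ℕ → Fin 4 | n ≤ k ∧ (x k = 2 ∨ x k = 3)} := by
      ext x; simp
    rw [this]
    apply isOpen_iUnion
    intro k
    by_cases hk : n ≤ k
    · have : {x : ℕ → Fin 4 | n ≤ k ∧ (x k = 2 ∨ x k = 3)} =
          (fun x : ℕ → Fin 4 => x k) ⁻¹' {2, 3} := by
        ext x; simp [hk]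
      rw [this]
      exact (continuous_apply k).isOpen_preimage _ (isOpen_discrete _)
    · have : {x : ℕ → Fin 4 | n ≤ k ∧ (x k = 2 ∨ x k = 3)} = ∅ := by
        ext x; simp [hk]
      rw [this]; exact isOpen_empty
  · intro x
    apply mem_closure_of_tendsto (f := fun j : ℕ => fun k => if k < j then x k else 2)
      (b := Filter.atTop)
    · rw [tendsto_pi_nhds]
      intro k
      apply Filter.Tendsto.congr' (f₁ := fun _ => x k)
      · filter_upwards [Filter.eventually_ge_atTop (k + 1)] with j hj
        simp [Nat.lt_of_succ_le hj]
      · exact tendsto_const_nhds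
    · filter_upwards with j
      simp only [Set.mem_iInter, Set.mem_setOf_eq]
      intro n
      refine ⟨max n j, le_max_left n j, Or.inl ?_⟩
      simp [Nat.not_lt.mpr (le_max_right n j)]
end

section
/- Let P, Q be finite posets and p : Q → P a quotient map, with induced map p̂ : O(Q) → O(P). Then p̂ is a lattice homomorphism (i.e., also preserves binary intersections) if and only if for all x, y ∈ Q and t ∈ P, whenever t ≤ p(x) and t ≤ p(y) there exists z ∈ Q with z ≤ x, z ≤ y and t ≤ p(z). -/
/-- The induced map on down-sets, via the canonical decomposition into principal
down-sets of maximal elements. -/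
def inducedMap {Q P : Type*} [Preorder Q] [Preorder P] (p : Q → P) (A : Set Q) : Set P :=
  ⋃ a ∈ {a ∈ A | ∀ b ∈ A, a ≤ b → a = b}, Set.Iic (p a)

lemma inducedMap_eq {Q P : Type*} [PartialOrder Q] [Preorder P] [Fintype Q]
    (p : Q → P) (hm : Monotone p) (A : Set Q) :
    inducedMap p A = ⋃ a ∈ A, Set.Iic (p a) := by
  apply subset_antisymm
  · refine Set.iUnion₂_subset fun a ha => ?_
    exact Set.subset_iUnion₂ (s := fun a _ => Set.Iic (p a)) a ha.1
  · refine Set.iUnion₂_subset fun a ha => ?_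
    have hs : ({b ∈ A | a ≤ b} : Set Q).Finite := Set.toFinite _
    obtain ⟨m, hm', hmax⟩ := hs.exists_maximalFor id _ ⟨a, ha, le_refl a⟩
    have hmA : m ∈ {a ∈ A | ∀ b ∈ A, a ≤ b → a = b} := by
      refine ⟨hm'.1, fun b hb hmb => ?_⟩
      exact le_antisymm hmb (hmax ⟨hb, hm'.2.trans hmb⟩ hmb)
    calc Set.Iic (p a) ⊆ Set.Iic (p m) := Set.Iic_subset_Iic.2 (hm hm'.2)
      _ ⊆ _ := Set.subset_iUnion₂ (s := fun a _ => Set.Iic (p a)) m hmA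

/-- for a quotient map `p` of finite posets, the induced map `p̂`
on down-set lattices is a lattice homomorphism (it always preserves unions, so
this amounts to preserving binary intersections) if and only if whenever
`t ≤ p(x)` and `t ≤ p(y)` there is `z ≤ x, y` with `t ≤ p(z)`. -/
theorem stmt_14 {Q P : Type*} [PartialOrder Q] [PartialOrder P] [Fintype Q] [Fintype P]
    (p : Q → P) (hp : IsPosetQuotient p) :
    (∀ A B : Set Q, IsLowerSet A → IsLowerSet B →
        inducedMap p (A ∩ B) = inducedMap p A ∩ inducedMap p B) ↔
    (∀ (x y : Q) (t : P), t ≤ p x → t ≤ p y →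
        ∃ z : Q, z ≤ x ∧ z ≤ y ∧ t ≤ p z) := by
  obtain ⟨-, hmono, -⟩ := hp
  simp only [inducedMap_eq p hmono]
  constructor
  · intro h x y t htx hty
    have hx : IsLowerSet (Set.Iic x) := isLowerSet_Iic x
    have hy : IsLowerSet (Set.Iic y) := isLowerSet_Iic y
    have := h _ _ hx hy
    have ht : t ∈ ⋃ a ∈ Set.Iic x ∩ Set.Iic y, Set.Iic (p a) := by
      rw [this]
      constructor
      · exact Set.mem_iUnion₂.2 ⟨x, le_refl x, htx⟩
      · exact Set.mem_iUnion₂.2 ⟨y, le_refl y, hty⟩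
    obtain ⟨z, ⟨hzx, hzy⟩, hz⟩ := Set.mem_iUnion₂.1 ht
    exact ⟨z, hzx, hzy, hz⟩
  · intro h A B hA hB
    apply subset_antisymm
    · refine Set.iUnion₂_subset fun a ha => Set.subset_inter ?_ ?_
      · exact Set.subset_iUnion₂ (s := fun a _ => Set.Iic (p a)) a ha.1
      · exact Set.subset_iUnion₂ (s := fun a _ => Set.Iic (p a)) a ha.2
    · rintro t ⟨htA, htB⟩
      obtain ⟨x, hxA, htx⟩ := Set.mem_iUnion₂.1 htA
      obtain ⟨y, hyB, hty⟩ := Set.mem_iUnion₂.1 htB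
      obtain ⟨z, hzx, hzy, hz⟩ := h x y t htx hty
      exact Set.mem_iUnion₂.2 ⟨z, ⟨hA hzx hxA, hB hzy hyB⟩, hz⟩
end

section
/- The inverse limit 𝕆(P) of the down-set lattices O(P_n) with induced quotient bonding maps is an atomic lattice: it has a least element (∅,∅,…), and every nonzero element lies above an atom. -/
/-- Membership in the inverse limit `𝕆(P)` of the down-set lattices `O(P n)`. -/
def InOLim (P : ℕ → Type*) [∀ n, PartialOrder (P n)] (p : ∀ n, P (n + 1) → P n)
    (a : ∀ n, Set (P n)) : Prop :=
  (∀ n, IsLowerSet (a n)) ∧ ∀ n, inducedMap (p n) (a (n + 1)) = a n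

lemma inducedMap_eq_lower {Q R : Type*} [PartialOrder Q] [Finite Q] [Preorder R] {f : Q → R}
    (hf : Monotone f) (A : Set Q) : inducedMap f A = {q | ∃ b ∈ A, q ≤ f b} := by
  ext q
  simp only [inducedMap, Set.mem_iUnion, Set.mem_setOf_eq, Set.mem_Iic, exists_prop]
  constructor
  · rintro ⟨a, ⟨haA, _⟩, hq⟩
    exact ⟨a, haA, hq⟩
  · rintro ⟨b, hbA, hq⟩
    obtain ⟨a, hba, ha⟩ := Finite.exists_le_maximal (p := (· ∈ A)) hbA
    exact ⟨a, ⟨ha.1, fun b hb hab => le_antisymm hab (ha.2 hb hab)⟩, hq.trans (hf hba)⟩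

lemma olim_nonempty_step (P : ℕ → Type*) [∀ n, PartialOrder (P n)] [∀ n, Fintype (P n)]
    (p : ∀ n, P (n + 1) → P n) (hp : ∀ n, IsPosetQuotient (p n))
    {a : ∀ n, Set (P n)} (h : InOLim P p a) (n : ℕ) :
    (a n).Nonempty ↔ (a (n + 1)).Nonempty := by
  rw [← h.2 n, inducedMap_eq_lower (hp n).2.1]
  constructor
  · rintro ⟨q, b, hb, -⟩
    exact ⟨b, hb⟩
  · rintro ⟨b, hb⟩
    exact ⟨p n b, b, hb, le_rfl⟩

lemma olim_all_nonempty (P : ℕ → Type*) [∀ n, PartialOrder (P n)] [∀ n, Fintype (P n)]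
    (p : ∀ n, P (n + 1) → P n) (hp : ∀ n, IsPosetQuotient (p n))
    {a : ∀ n, Set (P n)} (h : InOLim P p a) (hne : a ≠ (fun n => (∅ : Set (P n)))) :
    ∀ n, (a n).Nonempty := by
  obtain ⟨n₀, hn₀⟩ := Function.ne_iff.mp hne
  have key : ∀ k, (a 0).Nonempty ↔ (a k).Nonempty := by
    intro k
    induction k with
    | zero => rfl
    | succ k ih => exact ih.trans (olim_nonempty_step P p hp h k)
  have h0 : (a 0).Nonempty := (key n₀).mpr (Set.nonempty_iff_ne_empty.mpr hn₀)
  exact fun n => (key n).mp h0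


/-- `𝕆(P)` is an atomic lattice: `(∅,∅,…)` is its least element and
every nonzero element lies above an atom. -/
theorem stmt_17 (P : ℕ → Type*) [∀ n, PartialOrder (P n)] [∀ n, Fintype (P n)]
    (p : ∀ n, P (n + 1) → P n) (hp : ∀ n, IsPosetQuotient (p n)) :
    InOLim P p (fun n => (∅ : Set (P n))) ∧
    (∀ s : ∀ n, Set (P n), InOLim P p s → ∀ n, (∅ : Set (P n)) ⊆ s n) ∧
    ∀ a : ∀ n, Set (P n), InOLim P p a → a ≠ (fun n => (∅ : Set (P n))) →
      ∃ b : ∀ n, Set (P n), InOLim P p b ∧ b ≠ (fun n => (∅ : Set (P n))) ∧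
        (∀ n, b n ⊆ a n) ∧
        ∀ c : ∀ n, Set (P n), InOLim P p c → (∀ n, c n ⊆ b n) → c ≠ b →
          c = (fun n => (∅ : Set (P n))) := by
  refine ⟨⟨fun n => fun x y _ h => h.elim, fun n => ?_⟩, fun s _ n => Set.empty_subset _, ?_⟩
  · rw [inducedMap_eq_lower (hp n).2.1]
    simp
  intro a ha hane
  -- the set of nonzero elements of 𝕆(P) below a
  set S : Set (∀ n, Set (P n)) :=
    {c | InOLim P p c ∧ (∀ n, c n ⊆ a n) ∧ ∀ n, (c n).Nonempty} with hS
  have haS : a ∈ S := ⟨ha, fun n => le_rfl, olim_all_nonempty P p hp ha hane⟩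
  -- Zorn's lemma on the dual order
  have zorn := zorn_le_nonempty₀ (α := (∀ n, Set (P n))ᵒᵈ)
    (OrderDual.ofDual ⁻¹' S) ?_ (OrderDual.toDual a) haS
  · obtain ⟨b, hab, hbS, hbmax⟩ := zorn
    have hbS' : OrderDual.ofDual b ∈ S := hbS
    obtain ⟨hbO, hba, hbne⟩ := hbS'
    refine ⟨OrderDual.ofDual b, hbO, ?_, hba, ?_⟩
    · intro hb0
      have := hbne 0
      rw [hb0] at this
      exact this.ne_empty rfl
    · intro c hc hcb hcbne
      by_contra hc0
      have hcS : OrderDual.toDual c ∈ OrderDual.ofDual ⁻¹' S :=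
        ⟨hc, fun n => (hcb n).trans (hba n), olim_all_nonempty P p hp hc hc0⟩
      have hle : b ≤ OrderDual.toDual c := fun n => hcb n
      have h1 : c ≤ OrderDual.ofDual b := fun n => hcb n
      have h2 : OrderDual.ofDual b ≤ c := hbmax hcS hle
      exact hcbne (le_antisymm h1 h2)
  -- chain condition: every nonempty chain in S has a lower bound in S
  · intro C hCS hC y hyC
    -- for each n, find an element of C minimal at coordinates n and n+1
    have key : ∀ n, ∃ c ∈ C, (∀ c' ∈ C, c n ⊆ c' n) ∧ (∀ c' ∈ C, c (n+1) ⊆ c' (n+1)) := by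
      intro n
      set g : (∀ n, Set (P n)) → Set (P n) × Set (P (n+1)) := fun c => (c n, c (n+1)) with hg
      obtain ⟨v, -, hvmin⟩ :=
        Set.IsPWO.exists_le_minimal (s := g '' C) (Set.toFinite _).isPWO ⟨y, hyC, rfl⟩
      obtain ⟨c, hcC, rfl⟩ := hvmin.1
      have hmin : ∀ c' ∈ C, g c ≤ g c' := by
        intro c' hc'
        rcases eq_or_ne c c' with rfl | hne
        · exact le_rfl
        · rcases hC hcC hc' hne with h | h
          · exact hvmin.2 ⟨c', hc', rfl⟩ ⟨h n, h (n+1)⟩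
          · exact ⟨h n, h (n+1)⟩
      exact ⟨c, hcC, fun c' hc' => (hmin c' hc').1, fun c' hc' => (hmin c' hc').2⟩
    choose cm hcmC hcm1 hcm2 using key
    set m : ∀ n, Set (P n) := fun n => cm n n with hm
    have hmshift : ∀ n, cm n (n+1) = m (n+1) := fun n =>
      subset_antisymm (hcm2 n (cm (n+1)) (hcmC (n+1))) (hcm1 (n+1) (cm n) (hcmC n))
    have hmS : m ∈ S := by
      refine ⟨⟨fun n => ((hCS (hcmC n)).1.1 n), fun n => ?_⟩,
        fun n => (hCS (hcmC n)).2.1 n, fun n => (hCS (hcmC n)).2.2 n⟩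
      rw [← hmshift n]
      exact (hCS (hcmC n)).1.2 n
    exact ⟨OrderDual.toDual m, hmS, fun z hzC => fun n => hcm1 n z hzC⟩
end

section
/- In the inverse limit 𝕆(P) of the down-set lattices O(P_n), any countable family A = {(↓x_1^{(i)}, ↓x_2^{(i)}, …) : i ∈ ω} of principal elements has a supremum, given coordinatewise by (⋃_i ↓x_1^{(i)}, ⋃_i ↓x_2^{(i)}, …); moreover every nonzero element of 𝕆(P) is the supremum of a countable family of principal elements. Consequently 𝕆(P) is σ-complete. -/
/-- Membership in the inverse limit `P` of the posets `P n`: a thread. -/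
def InPLim (P : ℕ → Type*) (p : ∀ n, P (n + 1) → P n) (x : ∀ n, P n) : Prop :=
  ∀ n, p n (x (n + 1)) = x n

section Aux

universe u

/-- For a finite poset, the induced map on a set is its image's lower closure. -/
lemma my_inducedMap_eq {Q R : Type*} [PartialOrder Q] [Finite Q] [Preorder R]
    {p : Q → R} (hp : Monotone p) (A : Set Q) :
    inducedMap p A = {y | ∃ b ∈ A, y ≤ p b} := by
  ext y
  simp only [inducedMap, Set.mem_iUnion, Set.mem_Iic, Set.mem_setOf_eq, exists_prop,
    Set.sep_setOf, Set.mem_setOf_eq]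
  constructor
  · rintro ⟨b, ⟨hbA, -⟩, hle⟩
    exact ⟨b, hbA, hle⟩
  · rintro ⟨b, hbA, hle⟩
    obtain ⟨m, hbm, hm⟩ := Finite.exists_le_maximal (p := (· ∈ A)) hbA
    exact ⟨m, ⟨hm.1, fun c hc hmc => le_antisymm hmc (hm.2 hc hmc)⟩, hle.trans (hp hbm)⟩

lemma my_iInter_nonempty {X : Type*} [Finite X] (f : ℕ → Set X)
    (hdec : ∀ j, f (j + 1) ⊆ f j) (hne : ∀ j, (f j).Nonempty) :
    (⋂ j, f j).Nonempty := by
  have hanti : Antitone f := antitone_nat_of_succ_le hdec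
  have hrange : (Set.range fun j => (f j).ncard).Nonempty := ⟨(f 0).ncard, 0, rfl⟩
  obtain ⟨j0, hj0⟩ := Nat.sInf_mem hrange
  have hj0' : (f j0).ncard = sInf (Set.range fun j => (f j).ncard) := hj0
  obtain ⟨x, hx⟩ := hne j0
  refine ⟨x, Set.mem_iInter.2 fun j => ?_⟩
  rcases le_total j j0 with h | h
  · exact hanti h hx
  · have heq : f j = f j0 :=
      Set.eq_of_subset_of_ncard_le (hanti h)
        (by rw [hj0']; exact Nat.sInf_le ⟨j, rfl⟩) (Set.toFinite _)
    rw [heq]; exact hx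

/-- Iterated images of the sets `a (k + j)` down at level `k`. -/
def Reach {P : ℕ → Type u} (p : ∀ n, P (n + 1) → P n) (a : ∀ n, Set (P n)) :
    ℕ → ∀ k, Set (P k)
  | 0 => a
  | j + 1 => fun k => p k '' Reach p a j (k + 1)

/-- Key lemma: any point of `a 0` is dominated by a full thread lying in `a`. -/
lemma my_key {P : ℕ → Type u} [∀ n, PartialOrder (P n)] [∀ n, Fintype (P n)]
    (p : ∀ n, P (n + 1) → P n) (a : ∀ n, Set (P n))
    (hmono : ∀ n, Monotone (p n))
    (h1 : ∀ n, ∀ b ∈ a (n + 1), p n b ∈ a n)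
    (h2 : ∀ n, ∀ c ∈ a n, ∃ b ∈ a (n + 1), c ≤ p n b)
    (c : P 0) (hc : c ∈ a 0) :
    ∃ x : ∀ k, P k, (∀ k, p k (x (k + 1)) = x k) ∧ (∀ k, x k ∈ a k) ∧ c ≤ x 0 := by
  have reach_sub : ∀ j k, Reach p a j k ⊆ a k := by
    intro j
    induction j with
    | zero => intro k; exact subset_rfl
    | succ j ih =>
      rintro k y ⟨b, hb, rfl⟩
      exact h1 k b (ih (k + 1) hb)
  have reach_dec : ∀ j k, Reach p a (j + 1) k ⊆ Reach p a j k := by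
    intro j
    induction j with
    | zero =>
      rintro k y ⟨b, hb, rfl⟩
      exact h1 k b hb
    | succ j ih => intro k; exact Set.image_mono (ih (k + 1))
  have reach_ge : ∀ j k, ∀ d ∈ a k, ∃ e ∈ Reach p a j k, d ≤ e := by
    intro j
    induction j with
    | zero => intro k d hd; exact ⟨d, hd, le_rfl⟩
    | succ j ih =>
      intro k d hd
      obtain ⟨b, hb, hdb⟩ := h2 k d hd
      obtain ⟨e, he, hbe⟩ := ih (k + 1) b hb
      exact ⟨p k e, ⟨e, he, rfl⟩, hdb.trans (hmono k hbe)⟩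
  set D : ∀ k, Set (P k) := fun k => ⋂ j, Reach p a j k with hD
  have D_sub : ∀ k, D k ⊆ a k := fun k d hd => reach_sub 0 k (Set.mem_iInter.1 hd 0)
  have D_ge : ∀ k, ∀ d ∈ a k, ∃ e ∈ D k, d ≤ e := by
    intro k d hd
    obtain ⟨e, he⟩ := my_iInter_nonempty (fun j => Reach p a j k ∩ {e | d ≤ e})
      (fun j => Set.inter_subset_inter_left _ (reach_dec j k))
      (fun j => by obtain ⟨e, h1', h2'⟩ := reach_ge j k d hd; exact ⟨e, h1', h2'⟩)
    rw [Set.mem_iInter] at he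
    exact ⟨e, Set.mem_iInter.2 fun j => (he j).1, (he 0).2⟩
  have D_lift : ∀ k, ∀ d, d ∈ D k → ∃ e, e ∈ D (k + 1) ∧ p k e = d := by
    intro k d hd
    rw [hD, Set.mem_iInter] at hd
    obtain ⟨e, he⟩ := my_iInter_nonempty (fun j => Reach p a j (k + 1) ∩ {e | p k e = d})
      (fun j => Set.inter_subset_inter_left _ (reach_dec j (k + 1)))
      (fun j => by
        obtain ⟨e, he, hpe⟩ := (hd (j + 1) : d ∈ p k '' Reach p a j (k + 1))
        exact ⟨e, he, hpe⟩)
    rw [Set.mem_iInter] at he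
    exact ⟨e, Set.mem_iInter.2 fun j => (he j).1, (he 0).2⟩
  choose F hF1 hF2 using D_lift
  obtain ⟨d, hd, hcd⟩ := D_ge 0 c hc
  let x : ∀ k, {v : P k // v ∈ D k} :=
    fun k => Nat.rec ⟨d, hd⟩ (fun j ih => ⟨F j ih.1 ih.2, hF1 j ih.1 ih.2⟩) k
  exact ⟨fun k => (x k).1, fun k => hF2 k (x k).1 (x k).2,
    fun k => D_sub k (x k).2, hcd⟩

/-- Any point of `a n` is dominated at level `n` by a full thread lying in `a`. -/
lemma my_claim (n : ℕ) : ∀ (P : ℕ → Type u) [∀ k, PartialOrder (P k)] [∀ k, Fintype (P k)]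
    (p : ∀ k, P (k + 1) → P k) (a : ∀ k, Set (P k)),
    (∀ k, Monotone (p k)) →
    (∀ k, ∀ b ∈ a (k + 1), p k b ∈ a k) →
    (∀ k, ∀ c ∈ a k, ∃ b ∈ a (k + 1), c ≤ p k b) →
    ∀ c ∈ a n, ∃ x : ∀ k, P k,
      (∀ k, p k (x (k + 1)) = x k) ∧ (∀ k, x k ∈ a k) ∧ c ≤ x n := by
  induction n with
  | zero =>
    intro P _ _ p a hmono h1 h2 c hc
    exact my_key p a hmono h1 h2 c hc
  | succ n ih =>
    intro P _ _ p a hmono h1 h2 c hc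
    obtain ⟨y, hy1, hy2, hy3⟩ := ih (fun k => P (k + 1)) (fun k => p (k + 1))
      (fun k => a (k + 1)) (fun k => hmono (k + 1)) (fun k => h1 (k + 1))
      (fun k => h2 (k + 1)) c hc
    refine ⟨fun k => Nat.rec (motive := fun k => P k) (p 0 (y 0)) (fun j _ => y j) k,
      ?_, ?_, hy3⟩
    · intro k
      cases k with
      | zero => rfl
      | succ j => exact hy1 j
    · intro k
      cases k with
      | zero => exact h1 0 (y 0) (hy2 0)
      | succ j => exact hy2 j

lemma my_iUnion_InOLim {P : ℕ → Type u} [∀ n, PartialOrder (P n)] [∀ n, Fintype (P n)]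
    (p : ∀ n, P (n + 1) → P n) (hmono : ∀ n, Monotone (p n))
    {ι : Sort*} (x : ι → ∀ n, P n) (hx : ∀ i, InPLim P p (x i)) :
    InOLim P p (fun n => ⋃ i, Set.Iic (x i n)) := by
  constructor
  · intro n u v hvu hu
    simp only [Set.mem_iUnion, Set.mem_Iic] at hu ⊢
    obtain ⟨i, hi⟩ := hu
    exact ⟨i, hvu.trans hi⟩
  · intro n
    rw [my_inducedMap_eq (hmono n)]
    ext y
    simp only [Set.mem_setOf_eq, Set.mem_iUnion, Set.mem_Iic]
    constructor
    · rintro ⟨b, ⟨i, hbi⟩, hyb⟩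
      refine ⟨i, ?_⟩
      calc y ≤ p n b := hyb
        _ ≤ p n (x i (n + 1)) := hmono n hbi
        _ = x i n := hx i n
    · rintro ⟨i, hyi⟩
      refine ⟨x i (n + 1), ⟨i, le_rfl⟩, ?_⟩
      rw [hx i n]; exact hyi

lemma my_h1 {P : ℕ → Type u} [∀ n, PartialOrder (P n)] [∀ n, Fintype (P n)]
    (p : ∀ n, P (n + 1) → P n) (hmono : ∀ n, Monotone (p n))
    (a : ∀ n, Set (P n)) (ha : InOLim P p a) :
    ∀ n, ∀ b ∈ a (n + 1), p n b ∈ a n := by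
  intro n b hb
  rw [← ha.2 n, my_inducedMap_eq (hmono n)]
  exact ⟨b, hb, le_rfl⟩

lemma my_h2 {P : ℕ → Type u} [∀ n, PartialOrder (P n)] [∀ n, Fintype (P n)]
    (p : ∀ n, P (n + 1) → P n) (hmono : ∀ n, Monotone (p n))
    (a : ∀ n, Set (P n)) (ha : InOLim P p a) :
    ∀ n, ∀ c ∈ a n, ∃ b ∈ a (n + 1), c ≤ p n b := by
  intro n c hc
  rw [← ha.2 n, my_inducedMap_eq (hmono n)] at hc
  exact hc

end Aux

/-- in `𝕆(P)`, every countable family of principal elements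
`(↓x₁⁽ⁱ⁾, ↓x₂⁽ⁱ⁾, …)` has a supremum, given coordinatewise by unions; every
nonzero element of `𝕆(P)` is such a supremum of countably many principal
elements; and consequently `𝕆(P)` is σ-complete. -/
theorem stmt_18 (P : ℕ → Type*) [∀ n, PartialOrder (P n)] [∀ n, Fintype (P n)]
    (p : ∀ n, P (n + 1) → P n) (hp : ∀ n, IsPosetQuotient (p n)) :
    (∀ x : ℕ → ∀ n, P n, (∀ i, InPLim P p (x i)) →
      InOLim P p (fun n => ⋃ i : ℕ, Set.Iic (x i n)) ∧
      (∀ i n, Set.Iic (x i n) ⊆ ⋃ j : ℕ, Set.Iic (x j n)) ∧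
      ∀ s : ∀ n, Set (P n), InOLim P p s → (∀ i n, Set.Iic (x i n) ⊆ s n) →
        ∀ n, (⋃ i : ℕ, Set.Iic (x i n)) ⊆ s n) ∧
    (∀ a : ∀ n, Set (P n), InOLim P p a → a ≠ (fun n => (∅ : Set (P n))) →
      ∃ x : ℕ → ∀ n, P n, (∀ i, InPLim P p (x i)) ∧
        ∀ n, a n = ⋃ i : ℕ, Set.Iic (x i n)) ∧
    (∀ A : ℕ → ∀ n, Set (P n), (∀ i, InOLim P p (A i)) →
      (∃ s : ∀ n, Set (P n), InOLim P p s ∧ (∀ i n, A i n ⊆ s n) ∧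
        ∀ t : ∀ n, Set (P n), InOLim P p t → (∀ i n, A i n ⊆ t n) → ∀ n, s n ⊆ t n) ∧
      (∃ r : ∀ n, Set (P n), InOLim P p r ∧ (∀ i n, r n ⊆ A i n) ∧
        ∀ t : ∀ n, Set (P n), InOLim P p t → (∀ i n, t n ⊆ A i n) → ∀ n, t n ⊆ r n)) := by
  classical
  have hmono : ∀ n, Monotone (p n) := fun n => (hp n).2.1
  refine ⟨?_, ?_, ?_⟩
  · -- Part 1: suprema of countable families of principal elements
    intro x hx
    refine ⟨my_iUnion_InOLim p hmono x hx, fun i n => Set.subset_iUnion (fun j => Set.Iic (x j n)) i, ?_⟩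
    intro s _ hsub n
    exact Set.iUnion_subset fun i => hsub i n
  · -- Part 2: every nonzero element is a countable union of principal elements
    intro a ha hane
    have h1 := my_h1 p hmono a ha
    have h2 := my_h2 p hmono a ha
    have hm : ∃ m, (a m).Nonempty := by
      by_contra h
      push_neg at h
      exact hane (funext h)
    obtain ⟨m, c0, hc0⟩ := hm
    have key : ∀ n, ∀ c ∈ a n, ∃ x : ∀ k, P k,
        InPLim P p x ∧ (∀ k, x k ∈ a k) ∧ c ≤ x n :=
      fun n c hc => my_claim n P p a hmono h1 h2 c hc
    obtain ⟨x0, hx01, hx02, hx03⟩ := key m c0 hc0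
    have hNE : Nonempty ((n : ℕ) × P n) := ⟨⟨0, x0 0⟩⟩
    obtain ⟨g, hg⟩ := exists_surjective_nat ((n : ℕ) × P n)
    set X : ((n : ℕ) × P n) → ∀ k, P k :=
      fun s => if h : s.2 ∈ a s.1 then (key s.1 s.2 h).choose else x0 with hX
    have hX1 : ∀ s, InPLim P p (X s) := by
      intro s
      rw [hX]; dsimp only; split
      next h => exact (key _ _ h).choose_spec.1
      next => exact hx01
    have hX2 : ∀ s k, X s k ∈ a k := by
      intro s k
      rw [hX]; dsimp only; split
      next h => exact (key _ _ h).choose_spec.2.1 k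
      next => exact hx02 k
    have hX3 : ∀ s : (n : ℕ) × P n, s.2 ∈ a s.1 → s.2 ≤ X s s.1 := by
      intro s hs
      rw [hX]; dsimp only; rw [dif_pos hs]
      exact (key _ _ hs).choose_spec.2.2
    refine ⟨fun i => X (g i), fun i => hX1 _, ?_⟩
    intro n
    apply Set.Subset.antisymm
    · intro c hc
      obtain ⟨i, hi⟩ := hg ⟨n, c⟩
      refine Set.mem_iUnion.2 ⟨i, Set.mem_Iic.2 ?_⟩
      show c ≤ X (g i) n
      rw [hi]
      exact hX3 ⟨n, c⟩ hc
    · exact Set.iUnion_subset fun i b hb => ha.1 n (Set.mem_Iic.1 hb) (hX2 (g i) n)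
  · -- Part 3: σ-completeness
    intro A hA
    constructor
    · -- supremum
      refine ⟨fun n => ⋃ x : {x : ∀ k, P k // InPLim P p x ∧ ∃ i, ∀ k, x k ∈ A i k},
        Set.Iic (x.1 n), my_iUnion_InOLim p hmono _ (fun x => x.2.1), ?_, ?_⟩
      · intro i n c hc
        obtain ⟨x, hx1, hx2, hx3⟩ := my_claim n P p (A i) hmono
          (my_h1 p hmono (A i) (hA i)) (my_h2 p hmono (A i) (hA i)) c hc
        exact Set.mem_iUnion.2 ⟨⟨x, hx1, i, hx2⟩, Set.mem_Iic.2 hx3⟩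
      · intro t ht hsub n
        refine Set.iUnion_subset ?_
        rintro ⟨x, hx1, i, hx2⟩ c hc
        exact ht.1 n (Set.mem_Iic.1 hc) (hsub i n (hx2 n))
    · -- infimum
      refine ⟨fun n => ⋃ x : {x : ∀ k, P k // InPLim P p x ∧ ∀ i k, x k ∈ A i k},
        Set.Iic (x.1 n), my_iUnion_InOLim p hmono _ (fun x => x.2.1), ?_, ?_⟩
      · intro i n
        refine Set.iUnion_subset ?_
        rintro ⟨x, hx1, hx2⟩ c hc
        exact (hA i).1 n (Set.mem_Iic.1 hc) (hx2 i n)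
      · intro t ht hsub n c hc
        obtain ⟨x, hx1, hx2, hx3⟩ := my_claim n P p t hmono
          (my_h1 p hmono t ht) (my_h2 p hmono t ht) c hc
        exact Set.mem_iUnion.2 ⟨⟨x, hx1, fun i k => hsub i k (hx2 k)⟩, Set.mem_Iic.2 hx3⟩
end
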